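/- For every α ∈ k, the linear map λ_α : T_n(q) → k given on the canonical basis by λ_α(g^{n−i}x^j) = (−1)^i q^{i(i+1)/2} binom(j,i)_q α^j for all 0 ≤ i, j ≤ n−1 is a partial action of the Taft algebra T_n(q) on k. (Proposition 3.1.4) -/

import Mathlib

open scoped TensorProduct

/-- The Gaussian binomial coefficient `binom(m, ℓ)_q` in a field `k`, defined by
`binom(0,0)_q = 1`, `binom(m,ℓ)_q = 0` for `ℓ < 0` or `ℓ > m`, and the q-Pascal rule
`binom(i,s)_q = binom(i-1,s-1)_q + q^s · binom(i-1,s)_q` for `i ≥ 1`. -/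
def qbinom {k : Type*} [Field k] (q : k) : ℕ → ℤ → k
  | 0, s => if s = 0 then 1 else 0
  | (i + 1), s => qbinom q i (s - 1) + q ^ s.toNat * qbinom q i s

/-- The q-number `(m)_q = 1 + q + ⋯ + q^{m−1}`. -/
def qnum {k : Type*} [Field k] (q : k) (m : ℕ) : k := ∑ l ∈ Finset.range m, q ^ l

/-- The q-factorial `(m)_q! = (m)_q (m−1)_q ⋯ (1)_q`, with `(0)_q! = 1`. -/
def qfact {k : Type*} [Field k] (q : k) : ℕ → k
  | 0 => 1
  | (m + 1) => qnum q (m + 1) * qfact q m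

/-- The linear map `h ↦ Σ λ(h₁) h₂` (Sweedler notation). -/
noncomputable def lCont (k H : Type*) [CommSemiring k] [Semiring H] [Bialgebra k H]
    (lam : H →ₗ[k] k) : H →ₗ[k] H :=
  (TensorProduct.lid k H).toLinearMap ∘ₗ TensorProduct.map lam LinearMap.id ∘ₗ Coalgebra.comul

/-- The linear map `h ↦ Σ h₁ λ(h₂)` (Sweedler notation). -/
noncomputable def rCont (k H : Type*) [CommSemiring k] [Semiring H] [Bialgebra k H]
    (lam : H →ₗ[k] k) : H →ₗ[k] H :=
  (TensorProduct.rid k H).toLinearMap ∘ₗ TensorProduct.map LinearMap.id lam ∘ₗ Coalgebra.comul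

/-- A partial action of a bialgebra `H` on its base field `k`: a linear map `λ : H → k` with
`λ(1) = 1` and `λ(h)λ(y) = Σ λ(h₁)λ(h₂y)` for all `h, y ∈ H`; by linearity the right-hand side
is `λ((Σ λ(h₁) h₂) · y)`. -/
def IsPartialAction (k H : Type*) [CommSemiring k] [Semiring H] [Bialgebra k H]
    (lam : H →ₗ[k] k) : Prop :=
  lam 1 = 1 ∧ ∀ h y : H, lam h * lam y = lam (lCont k H lam h * y)

/-- A symmetric partial action additionally satisfies `λ(h)λ(y) = Σ λ(h₁y)λ(h₂)`, i.e.
`λ(h)λ(y) = λ((Σ h₁ λ(h₂)) · y)`. -/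
def IsSymmPartialAction (k H : Type*) [CommSemiring k] [Semiring H] [Bialgebra k H]
    (lam : H →ₗ[k] k) : Prop :=
  IsPartialAction k H lam ∧ ∀ h y : H, lam h * lam y = lam (rCont k H lam h * y)

/-- A realization of the Taft algebra `T_n(q)`: a Hopf algebra `H` over `k` with generators
`g, x` satisfying `g^n = 1`, `x^n = 0`, `xg = q·gx`, such that `{g^i x^j : 0 ≤ i,j ≤ n−1}` is a
`k`-basis, `g` is group-like and `x` is `(1,g)`-primitive. -/
structure TaftData (k : Type*) [Field k] (n : ℕ) (q : k) (H : Type*)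
    [Ring H] [HopfAlgebra k H] where
  g : H
  x : H
  g_pow_n : g ^ n = 1
  x_pow_n : x ^ n = 0
  x_mul_g : x * g = q • (g * x)
  basis : Module.Basis (Fin n × Fin n) k H
  basis_eq : ∀ i j : Fin n, basis (i, j) = g ^ (i : ℕ) * x ^ (j : ℕ)
  comul_g : Coalgebra.comul (R := k) g = g ⊗ₜ[k] g
  comul_x : Coalgebra.comul (R := k) x = x ⊗ₜ[k] (1 : H) + g ⊗ₜ[k] x
  counit_g : Coalgebra.counit (R := k) g = 1
  counit_x : Coalgebra.counit (R := k) x = 0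

namespace Aux

variable {k : Type*} [Field k] (q : k)

lemma qbinom_of_neg (m : ℕ) : ∀ s : ℤ, s < 0 → qbinom q m s = 0 := by
  induction m with
  | zero => intro s hs; simp [qbinom, hs.ne]
  | succ m ih =>
      intro s hs
      rw [qbinom, ih (s-1) (by omega), ih s hs]
      ring

lemma qbinom_zero_right (m : ℕ) : qbinom q m 0 = 1 := by
  induction m with
  | zero => simp [qbinom]
  | succ m ih =>
      rw [qbinom, qbinom_of_neg q m _ (by omega), ih]
      simp

lemma qbinom_of_lt (m : ℕ) : ∀ s : ℤ, (m : ℤ) < s → qbinom q m s = 0 := by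
  induction m with
  | zero => intro s hs; rw [qbinom]; simp; omega
  | succ m ih =>
      intro s hs
      push_cast at hs
      rw [qbinom, ih (s-1) (by omega), ih s (by omega)]
      ring

lemma qbinom_succ (m s : ℕ) :
    qbinom q (m+1) ((s : ℤ) + 1) = qbinom q m s + q ^ (s+1) * qbinom q m ((s:ℤ)+1) := by
  rw [qbinom]
  norm_num

lemma qbinom_self (m : ℕ) : qbinom q m m = 1 := by
  induction m with
  | zero => simp [qbinom]
  | succ m ih =>
      have h : ((m:ℤ) + 1) - 1 = (m:ℤ) := by ring
      rw [qbinom, Nat.cast_add, Nat.cast_one, h, ih, qbinom_of_lt q m ((m:ℤ)+1) (by omega)]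
      ring

lemma qnum_add (a b : ℕ) : qnum q (a + b) = qnum q a + q ^ a * qnum q b := by
  induction b with
  | zero => simp [qnum]
  | succ b ih =>
      have h1 : qnum q ((a+b)+1) = qnum q (a+b) + q^(a+b) := by
        rw [qnum, qnum, Finset.sum_range_succ]
      have h2 : qnum q (b+1) = qnum q b + q^b := by
        rw [qnum, qnum, Finset.sum_range_succ]
      rw [show a + (b+1) = (a+b)+1 by omega, h1, h2, ih, pow_add]
      ring

lemma qbinom_mul_qfact : ∀ m, ∀ d ≤ m,
    qbinom q m d * (qfact q d * qfact q (m - d)) = qfact q m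
  | 0, d, hd => by
      interval_cases d
      simp [qbinom, qfact]
  | (m+1), 0, _ => by simp [qbinom_zero_right, qfact]
  | (m+1), (e+1), he => by
      have he' : e ≤ m := by omega
      have key : qbinom q (m+1) ((e:ℤ)+1) = qbinom q m e + q^(e+1) * qbinom q m ((e:ℤ)+1) :=
        qbinom_succ q m e
      simp only [Nat.cast_add, Nat.cast_one, Nat.succ_sub_succ_eq_sub, key]
      rcases Nat.lt_or_ge m (e+1) with hm | hm
      · -- e = m
        have hem : e = m := by omega
        subst hem
        rw [qbinom_of_lt q e ((e:ℤ)+1) (by omega), qbinom_self q e]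
        simp only [Nat.sub_self]
        rw [qfact, qfact]
        ring
      · have h1 : qbinom q m e * (qfact q e * qfact q (m - e)) = qfact q m :=
          qbinom_mul_qfact m e he'
        have h2 : qbinom q m ((e:ℤ)+1) * (qfact q (e+1) * qfact q (m - (e+1))) = qfact q m := by
          have := qbinom_mul_qfact m (e+1) hm
          rwa [Nat.cast_add, Nat.cast_one] at this
        have hq1 : qfact q (e+1) = qnum q (e+1) * qfact q e := rfl
        have hq2 : qfact q (m - e) = qnum q (m - e) * qfact q (m - (e+1)) := by
          rw [show m - e = (m - (e+1)) + 1 by omega]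
          rw [qfact, show m - (e+1) + 1 = m - e by omega]
        have hsplit : qnum q (m + 1) = qnum q (e+1) + q^(e+1) * qnum q (m - e) := by
          rw [show m + 1 = (e+1) + (m - e) by omega, qnum_add]
        have hfm : qfact q (m+1) = qnum q (m+1) * qfact q m := rfl
        rw [hfm]
        linear_combination (qnum q (e+1)) * h1 + (q^(e+1) * qnum q (m-e)) * h2
          + (qbinom q m e * qfact q (m-e)) * hq1
          + (q^(e+1) * qbinom q m ((e:ℤ)+1) * qfact q (e+1)) * hq2
          + (- qfact q m) * hsplit

end Aux

namespace Aux2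
open Aux

variable {k : Type*} [Field k] {n : ℕ} {q : k} (hn : 2 ≤ n) (hq : IsPrimitiveRoot q n)

include hn hq

lemma q_ne_one : q ≠ 1 := by
  intro h
  have := hq.dvd_of_pow_eq_one 1 (by rw [h, one_pow])
  have := Nat.le_of_dvd one_pos this
  omega

lemma qnum_ne_zero {l : ℕ} (h1 : 0 < l) (h2 : l < n) : qnum q l ≠ 0 := by
  intro h
  have hgeom : qnum q l * (q - 1) = q ^ l - 1 := geom_sum_mul q l
  rw [h, zero_mul] at hgeom
  exact hq.pow_ne_one_of_pos_of_lt h1.ne' h2 (eq_of_sub_eq_zero hgeom.symm)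

lemma qfact_ne_zero : ∀ m, m < n → qfact q m ≠ 0 := by
  intro m
  induction m with
  | zero => intro _; rw [qfact]; exact one_ne_zero
  | succ m ih =>
      intro hm
      rw [qfact]
      exact mul_ne_zero (qnum_ne_zero hn hq (by omega) hm) (ih (by omega))

lemma qnum_n_zero : qnum q n = 0 := hq.geom_sum_eq_zero (by omega)

lemma qbinom_n_zero {d : ℕ} (h1 : 0 < d) (h2 : d < n) : qbinom q n (d : ℤ) = 0 := by
  have hf : qfact q n = 0 := by
    rw [show n = (n-1)+1 by omega, qfact, show n-1+1 = n by omega, qnum_n_zero hn hq, zero_mul]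
  have := qbinom_mul_qfact q n d (by omega)
  rw [hf] at this
  rcases mul_eq_zero.1 this with h | h
  · exact h
  · exact absurd h (mul_ne_zero (qfact_ne_zero hn hq d (by omega))
      (qfact_ne_zero hn hq (n-d) (by omega)))

lemma qbinom_trinomial {l i j : ℕ} (hl : l ≤ i) (hi : i ≤ j) (hj : j < n) :
    qbinom q j (l : ℤ) * qbinom q (j-l) ((i:ℤ)-(l:ℤ)) = qbinom q j (i : ℤ) * qbinom q i (l : ℤ) := by
  have hcast : (i:ℤ) - (l:ℤ) = ((i - l : ℕ) : ℤ) := by omega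
  rw [hcast]
  have hne : qfact q l * qfact q (i-l) * qfact q (j-i) ≠ 0 :=
    mul_ne_zero (mul_ne_zero (qfact_ne_zero hn hq l (by omega))
      (qfact_ne_zero hn hq (i-l) (by omega))) (qfact_ne_zero hn hq (j-i) (by omega))
  apply mul_right_cancel₀ hne
  have e1 : qbinom q j (l:ℤ) * (qfact q l * qfact q (j-l)) = qfact q j :=
    qbinom_mul_qfact q j l (by omega)
  have e2 : qbinom q (j-l) ((i-l : ℕ):ℤ) * (qfact q (i-l) * qfact q ((j-l)-(i-l))) = qfact q (j-l) :=
    qbinom_mul_qfact q (j-l) (i-l) (by omega)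
  have e3 : qbinom q j (i:ℤ) * (qfact q i * qfact q (j-i)) = qfact q j :=
    qbinom_mul_qfact q j i (by omega)
  have e4 : qbinom q i (l:ℤ) * (qfact q l * qfact q (i-l)) = qfact q i :=
    qbinom_mul_qfact q i l (by omega)
  rw [show (j-l)-(i-l) = j - i by omega] at e2
  calc qbinom q j (l:ℤ) * qbinom q (j-l) ((i-l:ℕ):ℤ) * (qfact q l * qfact q (i-l) * qfact q (j-i))
      = (qbinom q (j-l) ((i-l:ℕ):ℤ) * (qfact q (i-l) * qfact q (j-i))) * qbinom q j (l:ℤ) * qfact q l := by ring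
    _ = qfact q (j-l) * qbinom q j (l:ℤ) * qfact q l := by rw [e2]
    _ = qbinom q j (l:ℤ) * (qfact q l * qfact q (j-l)) := by ring
    _ = qfact q j := e1
    _ = qbinom q j (i:ℤ) * (qfact q i * qfact q (j-i)) := e3.symm
    _ = qbinom q j (i:ℤ) * ((qbinom q i (l:ℤ) * (qfact q l * qfact q (i-l))) * qfact q (j-i)) := by rw [e4]
    _ = qbinom q j (i:ℤ) * qbinom q i (l:ℤ) * (qfact q l * qfact q (i-l) * qfact q (j-i)) := by ring

lemma qbinom_nsub1 : ∀ t, t < n → (-1:k)^t * q^(t*(t+1)/2) * qbinom q (n-1) (t:ℤ) = 1 := by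
  intro t
  induction t with
  | zero => intro _; simp [qbinom_zero_right]
  | succ t ih =>
      intro ht
      have hrec : qbinom q (n-1) (t:ℤ) + q^(t+1) * qbinom q (n-1) ((t:ℤ)+1) = 0 := by
        have h0 : qbinom q n ((t:ℤ)+1) = 0 := by
          have := qbinom_n_zero hn hq (d := t+1) (by omega) ht
          push_cast at this ⊢
          exact this
        have := qbinom_succ q (n-1) t
        rw [show n - 1 + 1 = n by omega] at this
        rw [← this, h0]
      have heq : qbinom q (n-1) (t:ℤ) = -(q^(t+1) * qbinom q (n-1) ((t:ℤ)+1)) :=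
        eq_neg_of_add_eq_zero_left hrec
      have := ih (by omega)
      rw [heq] at this
      obtain ⟨c, hc⟩ := Nat.even_mul_succ_self t
      have h2 : (t+1)*(t+2) = t*(t+1) + 2*(t+1) := by ring
      have hT : (t+1)*(t+2)/2 = t*(t+1)/2 + (t+1) := by omega
      rw [show ((t:ℤ)+1) = (((t+1:ℕ)):ℤ) by push_cast; ring] at this
      rw [hT, pow_add]
      linear_combination this

end Aux2

namespace Aux

variable {k : Type*} [Field k] (q : k)

lemma qbinom_succ_eq (m : ℕ) (s : ℤ) :
    qbinom q (m+1) s = qbinom q m (s-1) + q ^ s.toNat * qbinom q m s := by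
  rw [qbinom]

lemma qbinom_succ_symm : ∀ j : ℕ, ∀ l ≤ j + 1,
    qbinom q (j+1) (l:ℤ) = q^(j+1-l) * qbinom q j ((l:ℤ)-1) + qbinom q j (l:ℤ) := by
  intro j
  induction j with
  | zero =>
      intro l hl
      interval_cases l
      · simp [qbinom_zero_right, qbinom_of_neg q 0 (-1) (by omega)]
      · rw [qbinom_self]
        push_cast
        rw [qbinom_zero_right, qbinom_of_lt q 0 1 (by omega)]
        ring
  | succ j ih =>
      intro l hl
      rcases Nat.eq_zero_or_pos l with rfl | hl0
      · simp [qbinom_zero_right, qbinom_of_neg q (j+1) (-1) (by omega)]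
      obtain ⟨e, rfl⟩ : ∃ e, l = e + 1 := ⟨l - 1, by omega⟩
      rcases Nat.lt_or_ge (j+1) (e+1) with he | he
      · -- e = j + 1
        have : e = j + 1 := by omega
        subst this
        rw [qbinom_self, Nat.sub_self, pow_zero, one_mul,
          show (((j+1+1:ℕ)):ℤ)-1 = (((j+1):ℕ):ℤ) by push_cast; ring, qbinom_self,
          qbinom_of_lt q (j+1) (((j+1+1):ℕ):ℤ) (by push_cast; omega)]
        ring
      · -- e + 1 ≤ j + 1
        have lhs : qbinom q (j+1+1) (((e+1:ℕ)):ℤ) =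
            qbinom q (j+1) (e:ℤ) + q^(e+1) * qbinom q (j+1) ((e:ℤ)+1) := by
          push_cast
          have := qbinom_succ q (j+1) e
          push_cast at this
          exact this
        rw [lhs]
        push_cast
        rw [show (e:ℤ)+1-1 = (e:ℤ) by ring]
        have ihe := ih e (by omega)
        have ih2 := ih (e+1) (by omega)
        push_cast at ih2
        rw [show (e:ℤ)+1-1 = (e:ℤ) by ring] at ih2
        try rw [show j+1-(e+1) = j-e by omega] at ih2
        have defC : qbinom q (j+1) ((e:ℤ)+1)
            = qbinom q j (e:ℤ) + q^(e+1) * qbinom q j ((e:ℤ)+1) := qbinom_succ q j e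
        have defA : qbinom q (j+1) (e:ℤ) = qbinom q j ((e:ℤ)-1) + q^e * qbinom q j (e:ℤ) := by
          have h := qbinom_succ_eq q j (e:ℤ)
          rwa [show ((e:ℤ)).toNat = e by omega] at h
        have p1 : q^(j+1-e) = q^(j-e) * q := by
          rw [← pow_succ, show j-e+1 = j+1-e by omega]
        rw [p1] at ihe ⊢
        linear_combination ihe + q^(e+1) * ih2 - defC - (q^(j-e)*q) * defA

lemma q_add_pow {A : Type*} [Ring A] [Algebra k A] (X Y : A)
    (hc : X * Y = q • (Y * X)) (j : ℕ) :
    (X + Y)^j = ∑ l ∈ Finset.range (j+1), qbinom q j (l:ℤ) • (Y^l * X^(j-l)) := by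
  have hpow : ∀ b : ℕ, X^b * Y = q^b • (Y * X^b) := by
    intro b
    induction b with
    | zero => simp
    | succ b ih =>
        rw [pow_succ, mul_assoc, hc, mul_smul_comm, ← mul_assoc, ih, smul_mul_assoc,
          smul_smul, mul_assoc, ← pow_succ, ← pow_succ']
  induction j with
  | zero => simp [qbinom_zero_right]
  | succ j ih =>
      rw [pow_succ, ih, Finset.sum_mul]
      have expand : ∀ l ∈ Finset.range (j+1),
          (qbinom q j (l:ℤ) • (Y^l * X^(j-l))) * (X + Y)
            = qbinom q j (l:ℤ) • (Y^l * X^(j+1-l))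
              + (q^(j-l) * qbinom q j (l:ℤ)) • (Y^(l+1) * X^(j-l)) := by
        intro l hl
        simp only [Finset.mem_range] at hl
        rw [smul_mul_assoc, mul_add, mul_assoc, ← pow_succ, show j-l+1 = j+1-l by omega,
          mul_assoc, hpow (j-l), mul_smul_comm, ← mul_assoc, ← pow_succ, smul_add, smul_smul,
          mul_comm (qbinom q j (l:ℤ)) (q^(j-l))]
      rw [Finset.sum_congr rfl expand, Finset.sum_add_distrib]
      have hT : ∑ l ∈ Finset.range (j+1+1), qbinom q (j+1) (l:ℤ) • (Y^l * X^(j+1-l))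
          = (∑ l ∈ Finset.range (j+1+1), qbinom q j (l:ℤ) • (Y^l * X^(j+1-l)))
            + ∑ l ∈ Finset.range (j+1+1),
                (q^(j+1-l) * qbinom q j ((l:ℤ)-1)) • (Y^l * X^(j+1-l)) := by
        rw [← Finset.sum_add_distrib]
        refine Finset.sum_congr rfl fun l hl => ?_
        simp only [Finset.mem_range] at hl
        rw [qbinom_succ_symm q j l (by omega), add_smul, add_comm]
      rw [hT]
      congr 1
      · symm
        rw [Finset.sum_range_succ, qbinom_of_lt q j ((j+1 : ℕ):ℤ) (by push_cast; omega),
          zero_smul, add_zero]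
      · symm
        rw [Finset.sum_range_succ']
        simp only [Nat.cast_zero, zero_sub, pow_zero, one_mul, Nat.sub_zero, Nat.cast_add,
          Nat.cast_one, add_sub_cancel_right, Nat.succ_sub_succ_eq_sub]
        rw [qbinom_of_neg q j (-1) (by omega)]
        simp only [mul_zero, zero_smul, add_zero]

end Aux

namespace TaftAux
open Aux Aux2

variable {k H : Type*} [Field k] [Ring H] [HopfAlgebra k H]
  {n : ℕ} {q : k} (T : TaftData k n q H)

lemma gpow_add_n (a : ℕ) : T.g ^ (a + n) = T.g ^ a := by
  rw [pow_add, T.g_pow_n, mul_one]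

lemma x_gpow (a : ℕ) : T.x * T.g ^ a = q ^ a • (T.g ^ a * T.x) := by
  induction a with
  | zero => simp
  | succ a ih =>
      rw [pow_succ, ← mul_assoc, ih, smul_mul_assoc, mul_assoc, T.x_mul_g, mul_smul_comm,
        smul_smul, ← pow_succ, ← mul_assoc, ← pow_succ]

lemma comul_gpow (a : ℕ) : Coalgebra.comul (R := k) (T.g ^ a) = (T.g ^ a) ⊗ₜ[k] (T.g ^ a) := by
  rw [Bialgebra.comul_pow, T.comul_g, Algebra.TensorProduct.tmul_pow]

lemma comul_gx (a j : ℕ) :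
    Coalgebra.comul (R := k) (T.g ^ a * T.x ^ j)
      = ∑ l ∈ Finset.range (j+1), qbinom q j (l:ℤ) •
          ((T.g ^ (a+l) * T.x ^ (j-l)) ⊗ₜ[k] (T.g ^ a * T.x ^ l)) := by
  simp only [Bialgebra.comul_mul, Bialgebra.comul_pow, T.comul_x, T.comul_g,
    Algebra.TensorProduct.tmul_pow]
  have hc : (T.x ⊗ₜ[k] (1:H)) * (T.g ⊗ₜ[k] T.x) = q • ((T.g ⊗ₜ[k] T.x) * (T.x ⊗ₜ[k] (1:H))) := by
    rw [Algebra.TensorProduct.tmul_mul_tmul, Algebra.TensorProduct.tmul_mul_tmul,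
      T.x_mul_g, one_mul, mul_one, TensorProduct.smul_tmul']
  rw [q_add_pow q (T.x ⊗ₜ[k] (1:H)) (T.g ⊗ₜ[k] T.x) hc j, Finset.mul_sum]
  refine Finset.sum_congr rfl fun l hl => ?_
  rw [mul_smul_comm]
  congr 1
  rw [Algebra.TensorProduct.tmul_pow, Algebra.TensorProduct.tmul_pow, one_pow,
    Algebra.TensorProduct.tmul_mul_tmul, mul_one, Algebra.TensorProduct.tmul_mul_tmul,
    ← mul_assoc, ← pow_add]

lemma lCont_gx (lam : H →ₗ[k] k) (a j : ℕ) :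
    lCont k H lam (T.g ^ a * T.x ^ j)
      = ∑ l ∈ Finset.range (j+1),
          (qbinom q j (l:ℤ) * lam (T.g ^ (a+l) * T.x ^ (j-l))) • (T.g ^ a * T.x ^ l) := by
  rw [lCont, LinearMap.comp_apply, LinearMap.comp_apply, comul_gx, map_sum, map_sum]
  refine Finset.sum_congr rfl fun l hl => ?_
  simp only [map_smul, TensorProduct.map_tmul, LinearMap.id_apply, LinearEquiv.coe_coe,
    TensorProduct.lid_tmul, smul_smul]


lemma W_mul_gx (α : k) (i l : ℕ) (hi : i ≤ n-1) (hn : 2 ≤ n) :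
    ((T.x - α • 1) * T.g^(n-1)) * (T.g^(n-i) * T.x^l)
      = q^(n-(i+1)) • (T.g^(n-(i+1)) * T.x^(l+1)) - α • (T.g^(n-(i+1)) * T.x^l) := by
  have hg : T.g^(n-1) * (T.g^(n-i) * T.x^l) = T.g^(n-(i+1)) * T.x^l := by
    rw [← mul_assoc, ← pow_add, show (n-1)+(n-i) = (n-(i+1)) + n by omega, gpow_add_n]
  rw [mul_assoc, hg, sub_mul, smul_mul_assoc, one_mul]
  congr 1
  rw [← mul_assoc, x_gpow, smul_mul_assoc, mul_assoc, ← pow_succ']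

lemma cf_succ (α : k) (i : ℕ) : ∀ l ≤ i + 1,
    (-1:k)^(i+1-l) * q^((i+1-l)*((i+1-l)+1)/2) * qbinom q (i+1) (l:ℤ) * α^(i+1-l)
      = (-1:k)^(i+1-l) * q^((i+1-l)*((i+1-l)+1)/2) * qbinom q i ((l:ℤ)-1) * α^(i+1-l)
        - q^(i+1) * α *
          ((-1:k)^(i-l) * q^((i-l)*((i-l)+1)/2) * qbinom q i (l:ℤ) * α^(i-l)) := by
  intro l hl
  rcases Nat.lt_or_ge i l with hli | hli
  · -- l = i + 1
    have : l = i + 1 := by omega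
    subst this
    rw [qbinom_self, qbinom_of_lt q i ((i+1:ℕ):ℤ) (by push_cast; omega),
      show ((i+1:ℕ):ℤ) - 1 = ((i:ℕ):ℤ) by push_cast; ring, qbinom_self, Nat.sub_self]
    ring
  · -- l ≤ i
    have hP : qbinom q (i+1) (l:ℤ) = qbinom q i ((l:ℤ)-1) + q^l * qbinom q i (l:ℤ) := by
      have h := qbinom_succ_eq q i (l:ℤ)
      rwa [show ((l:ℤ)).toNat = l by omega] at h
    rw [hP]
    rw [show i+1-l = (i-l)+1 by omega]
    obtain ⟨c0, hc0⟩ := Nat.even_mul_succ_self (i-l)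
    have hT : ((i-l)+1)*(((i-l)+1)+1)/2 = (i-l)*((i-l)+1)/2 + ((i-l)+1) := by
      have : ((i-l)+1)*(((i-l)+1)+1) = (i-l)*((i-l)+1) + 2*((i-l)+1) := by ring
      omega
    rw [hT, pow_add, pow_add, show i+1 = ((i-l)+1)+l by omega, pow_add, pow_add]
    ring

lemma W_pow (hn : 2 ≤ n) (hq : IsPrimitiveRoot q n) (α : k) :
    ∀ i ≤ n-1, q^(i*(i+1)/2) • ((T.x - α • 1) * T.g^(n-1))^i
      = ∑ l ∈ Finset.range (i+1),
          ((-1:k)^(i-l) * q^((i-l)*((i-l)+1)/2) * qbinom q i (l:ℤ) * α^(i-l))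
            • (T.g^(n-i) * T.x^l) := by
  intro i
  induction i with
  | zero =>
      intro _
      simp [T.g_pow_n, qbinom_zero_right]
  | succ i ih =>
      intro hi
      specialize ih (by omega)
      obtain ⟨c0, hc0⟩ := Nat.even_mul_succ_self i
      have hT : (i+1)*((i+1)+1)/2 = i*(i+1)/2 + (i+1) := by
        have : (i+1)*((i+1)+1) = i*(i+1) + 2*(i+1) := by ring
        omega
      rw [hT, pow_add, pow_succ' ((T.x - α • 1) * T.g^(n-1)) i, mul_comm (q^(i*(i+1)/2)),
        mul_smul, ← mul_smul_comm, ih, Finset.mul_sum, Finset.smul_sum]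
      have hqn : q^(i+1) * q^(n-(i+1)) = 1 := by
        rw [← pow_add, show (i+1)+(n-(i+1)) = n by omega, hq.pow_eq_one]
      have expand : ∀ l ∈ Finset.range (i+1),
          q^(i+1) • (((T.x - α • 1) * T.g^(n-1)) *
              (((-1:k)^(i-l) * q^((i-l)*((i-l)+1)/2) * qbinom q i (l:ℤ) * α^(i-l))
                • (T.g^(n-i) * T.x^l)))
            = ((-1:k)^(i-l) * q^((i-l)*((i-l)+1)/2) * qbinom q i (l:ℤ) * α^(i-l)) •
                (T.g^(n-(i+1)) * T.x^(l+1))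
              - (q^(i+1) * α * ((-1:k)^(i-l) * q^((i-l)*((i-l)+1)/2) * qbinom q i (l:ℤ)
                  * α^(i-l))) • (T.g^(n-(i+1)) * T.x^l) := by
        intro l _
        rw [mul_smul_comm, W_mul_gx T α i l (by omega) hn, smul_smul, smul_sub, smul_smul,
          smul_smul]
        congr 1
        · congr 1
          linear_combination ((-1:k)^(i-l) * q^((i-l)*((i-l)+1)/2) * qbinom q i (l:ℤ)
            * α^(i-l)) * hqn
        · congr 1
          ring
      rw [Finset.sum_congr rfl expand, Finset.sum_sub_distrib]
      have hRHS : ∑ l ∈ Finset.range (i+1+1),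
          ((-1:k)^(i+1-l) * q^((i+1-l)*((i+1-l)+1)/2) * qbinom q (i+1) (l:ℤ) * α^(i+1-l))
            • (T.g^(n-(i+1)) * T.x^l)
          = (∑ l ∈ Finset.range (i+1+1),
              ((-1:k)^(i+1-l) * q^((i+1-l)*((i+1-l)+1)/2) * qbinom q i ((l:ℤ)-1) * α^(i+1-l))
                • (T.g^(n-(i+1)) * T.x^l))
            - ∑ l ∈ Finset.range (i+1+1),
                (q^(i+1) * α * ((-1:k)^(i-l) * q^((i-l)*((i-l)+1)/2) * qbinom q i (l:ℤ)
                  * α^(i-l))) • (T.g^(n-(i+1)) * T.x^l) := by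
        rw [← Finset.sum_sub_distrib]
        refine Finset.sum_congr rfl fun l hl => ?_
        simp only [Finset.mem_range] at hl
        rw [cf_succ (q := q) α i l (by omega), sub_smul]
      rw [hRHS]
      congr 1
      · -- first sums
        symm
        rw [Finset.sum_range_succ']
        simp only [Nat.cast_zero, zero_sub, Nat.cast_add, Nat.cast_one, add_sub_cancel_right,
          Nat.succ_sub_succ_eq_sub]
        rw [qbinom_of_neg q i (-1) (by omega)]
        simp only [mul_zero, zero_mul, zero_smul, add_zero]
      · -- second sums
        symm
        rw [Finset.sum_range_succ, qbinom_of_lt q i ((i+1:ℕ):ℤ) (by push_cast; omega)]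
        simp only [mul_zero, zero_mul, zero_smul, add_zero]


variable (hn : 2 ≤ n) (hq : IsPrimitiveRoot q n) (α : k) (lam : H →ₗ[k] k)
  (hlam : ∀ i j : ℕ, i ≤ n - 1 → j ≤ n - 1 →
      lam (T.g ^ (n - i) * T.x ^ j) =
        (-1 : k) ^ i * q ^ (i * (i + 1) / 2) * qbinom q j (i : ℤ) * α ^ j)

include hn hlam

lemma lam_shift (i j l : ℕ) (hi : i ≤ n-1) (hj : j ≤ n-1) (hl : l ≤ j) :
    lam (T.g^((n-i)+l) * T.x^(j-l))
      = if l ≤ i then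
          (-1:k)^(i-l) * q^((i-l)*((i-l)+1)/2) * qbinom q (j-l) ((i-l:ℕ):ℤ) * α^(j-l)
        else 0 := by
  split_ifs with h
  · rw [show (n-i)+l = n-(i-l) by omega]
    exact hlam (i-l) (j-l) (by omega) (by omega)
  · push_neg at h
    rw [show (n-i)+l = (n-(n-l+i)) + n by omega, gpow_add_n,
      hlam (n-l+i) (j-l) (by omega) (by omega),
      qbinom_of_lt q (j-l) ((n-l+i:ℕ):ℤ) (by omega)]
    ring

lemma lCont_zero (i j : ℕ) (hi : i ≤ n-1) (hj : j ≤ n-1) (hji : j < i) :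
    lCont k H lam (T.g^(n-i) * T.x^j) = 0 := by
  rw [lCont_gx]
  refine Finset.sum_eq_zero fun l hl => ?_
  simp only [Finset.mem_range] at hl
  rw [lam_shift T hn α lam hlam i j l hi hj (by omega), if_pos (by omega),
    qbinom_of_lt q (j-l) ((i-l:ℕ):ℤ) (by omega)]
  simp

include hq

lemma lCont_eq (i j : ℕ) (hi : i ≤ n-1) (hj : j ≤ n-1) (hij : i ≤ j) :
    lCont k H lam (T.g^(n-i) * T.x^j)
      = (qbinom q j (i:ℤ) * α^(j-i)) •
          (q^(i*(i+1)/2) • ((T.x - α • 1) * T.g^(n-1))^i) := by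
  rw [lCont_gx, W_pow T hn hq α i (by omega), Finset.smul_sum]
  have hext : ∑ l ∈ Finset.range (i+1),
        (qbinom q j (i:ℤ) * α^(j-i)) •
          (((-1:k)^(i-l) * q^((i-l)*((i-l)+1)/2) * qbinom q i (l:ℤ) * α^(i-l))
            • (T.g^(n-i) * T.x^l))
      = ∑ l ∈ Finset.range (j+1),
        (qbinom q j (i:ℤ) * α^(j-i)) •
          (((-1:k)^(i-l) * q^((i-l)*((i-l)+1)/2) * qbinom q i (l:ℤ) * α^(i-l))
            • (T.g^(n-i) * T.x^l)) := by
    refine Finset.sum_subset (Finset.range_subset_range.mpr (by omega)) fun l hl hnl => ?_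
    simp only [Finset.mem_range] at hl hnl
    rw [qbinom_of_lt q i (l:ℤ) (by omega)]
    simp
  rw [hext]
  refine Finset.sum_congr rfl fun l hl => ?_
  simp only [Finset.mem_range] at hl
  rw [lam_shift T hn α lam hlam i j l hi hj (by omega)]
  rcases le_or_gt l i with hli | hli
  · rw [if_pos hli, smul_smul]
    congr 1
    have htri := qbinom_trinomial hn hq hli hij (by omega)
    rw [show ((i-l:ℕ):ℤ) = (i:ℤ)-(l:ℤ) by omega]
    have hα : α^(j-l) = α^(j-i) * α^(i-l) := by
      rw [← pow_add]
      congr 1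
      omega
    rw [hα]
    linear_combination ((-1:k)^(i-l) * q^((i-l)*((i-l)+1)/2) * α^(j-i) * α^(i-l)) * htri
  · rw [if_neg (by omega), qbinom_of_lt q i (l:ℤ) (by omega)]
    simp

lemma lam_W (m s : ℕ) (hm : m ≤ n-1) (hs : s ≤ n-1) :
    lam (((T.x - α • 1) * T.g^(n-1)) * (T.g^(n-m) * T.x^s))
      = -α * lam (T.g^(n-m) * T.x^s) := by
  rw [W_mul_gx T α m s hm hn, map_sub, map_smul, map_smul, smul_eq_mul, smul_eq_mul]
  obtain ⟨c0, hc0⟩ := Nat.even_mul_succ_self m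
  have hTm : (q:k)^((m+1)*(m+1+1)/2) = q^(m*(m+1)/2) * q^(m+1) := by
    rw [← pow_add]
    congr 1
    have : (m+1)*(m+1+1) = m*(m+1) + 2*(m+1) := by ring
    omega
  rcases Nat.lt_or_ge m (n-1) with hm2 | hm2
  · -- m ≤ n - 2
    rcases Nat.lt_or_ge s (n-1) with hs2 | hs2
    · -- s ≤ n - 2
      rw [hlam (m+1) (s+1) (by omega) (by omega), hlam (m+1) s (by omega) (by omega),
        hlam m s (by omega) (by omega)]
      have hP : qbinom q (s+1) ((m+1:ℕ):ℤ) = qbinom q s (m:ℤ) + q^(m+1) * qbinom q s ((m+1:ℕ):ℤ) := by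
        have h := qbinom_succ q s m
        rwa [show ((m:ℤ)+1) = ((m+1:ℕ):ℤ) by push_cast; ring] at h
      have hqq : q^(n-(m+1)) * q^(m+1) = 1 := by
        rw [← pow_add, show (n-(m+1))+(m+1) = n by omega, hq.pow_eq_one]
      rw [hTm]
      linear_combination ((-1:k)^(m+1) * q^(m*(m+1)/2) * α^(s+1)
          * qbinom q (s+1) ((m+1:ℕ):ℤ)) * hqq
        + ((-1:k)^(m+1) * q^(m*(m+1)/2) * α^(s+1)) * hP
    · -- s = n - 1
      have hs1 : s = n-1 := by omega
      subst hs1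
      rw [show n-1+1 = n by omega, T.x_pow_n, mul_zero, map_zero, mul_zero,
        hlam (m+1) (n-1) (by omega) (by omega), hlam m (n-1) (by omega) (by omega)]
      have hP0 : qbinom q (n-1) (m:ℤ) + q^(m+1) * qbinom q (n-1) ((m+1:ℕ):ℤ) = 0 := by
        have h := qbinom_succ q (n-1) m
        rw [show n-1+1 = n by omega, show ((m:ℤ)+1) = ((m+1:ℕ):ℤ) by push_cast; ring] at h
        rw [← h, qbinom_n_zero hn hq (by omega) (by omega)]
      rw [hTm]
      linear_combination ((-1:k)^m * q^(m*(m+1)/2) * α^(n-1) * α) * hP0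
  · -- m = n - 1
    have hm1 : m = n-1 := by omega
    subst hm1
    have heval : ∀ s', s' ≤ n-1 → lam ((1:H) * T.x^(s')) = α^(s') := by
      intro s' hs'
      have h := hlam 0 s' (by omega) hs'
      rw [Nat.sub_zero, T.g_pow_n] at h
      rw [h]
      norm_num [qbinom_zero_right]
    rw [show n-(n-1+1) = 0 by omega, pow_zero, pow_zero, one_mul]
    rcases Nat.lt_or_ge s (n-1) with hs2 | hs2
    · rw [heval (s+1) (by omega), heval s (by omega),
        hlam (n-1) s (by omega) (by omega),
        qbinom_of_lt q s ((n-1:ℕ):ℤ) (by omega)]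
      ring
    · have hs1 : s = n-1 := by omega
      subst hs1
      rw [show n-1+1 = n by omega, T.x_pow_n, mul_zero, map_zero,
        heval (n-1) (by omega), hlam (n-1) (n-1) (by omega) (by omega)]
      have hk := qbinom_nsub1 hn hq (n-1) (by omega)
      linear_combination (α * α^(n-1)) * hk

lemma lam_W_all (y : H) :
    lam (((T.x - α • 1) * T.g^(n-1)) * y) = -α * lam y := by
  have hmaps : lam ∘ₗ LinearMap.mulLeft k ((T.x - α • 1) * T.g^(n-1)) = (-α) • lam := by
    refine T.basis.ext fun p => ?_
    rcases p with ⟨a, b⟩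
    rw [T.basis_eq]
    simp only [LinearMap.comp_apply, LinearMap.mulLeft_apply, LinearMap.smul_apply, smul_eq_mul]
    obtain ⟨m, hm, hgm⟩ : ∃ m, m ≤ n-1 ∧ T.g^(a:ℕ) = T.g^(n-m) := by
      rcases Nat.eq_zero_or_pos (a:ℕ) with h0 | h0
      · exact ⟨0, by omega, by rw [h0, Nat.sub_zero, pow_zero, T.g_pow_n]⟩
      · have ha : (a:ℕ) < n := a.isLt
        exact ⟨n - (a:ℕ), by omega, by rw [show n - (n-(a:ℕ)) = (a:ℕ) by omega]⟩
    rw [hgm]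
    exact lam_W T hn hq α lam hlam m (b:ℕ) hm (by have := b.isLt; omega)
  have h2 := LinearMap.congr_fun hmaps y
  simp only [LinearMap.comp_apply, LinearMap.mulLeft_apply, LinearMap.smul_apply,
    smul_eq_mul, neg_mul] at h2
  rw [h2]
  ring

lemma lam_W_pow : ∀ i : ℕ, ∀ y : H,
    lam ((((T.x - α • 1) * T.g^(n-1))^i) * y) = (-α)^i * lam y := by
  intro i
  induction i with
  | zero => intro y; simp
  | succ i ih =>
      intro y
      rw [pow_succ, mul_assoc, ih, lam_W_all T hn hq α lam hlam, pow_succ]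
      ring

end TaftAux

/-- Proposition 3.1.4: for every `α ∈ k`, the linear map `λ_α : T_n(q) → k` given on the
canonical basis by `λ_α(g^{n−i}x^j) = (−1)^i q^{i(i+1)/2} binom(j,i)_q α^j` for all
`0 ≤ i, j ≤ n−1` is a partial action of the Taft algebra `T_n(q)` on `k`. -/
theorem prop_3_1_4 {k H : Type*} [Field k] [Ring H] [HopfAlgebra k H]
    {n : ℕ} (hn : 2 ≤ n) {q : k} (hq : IsPrimitiveRoot q n)
    (T : TaftData k n q H) (α : k) (lam : H →ₗ[k] k)
    (hlam : ∀ i j : ℕ, i ≤ n - 1 → j ≤ n - 1 →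
      lam (T.g ^ (n - i) * T.x ^ j) =
        (-1 : k) ^ i * q ^ (i * (i + 1) / 2) * qbinom q j (i : ℤ) * α ^ j) :
    IsPartialAction k H lam := by
  constructor
  · have h := hlam 0 0 (by omega) (by omega)
    rw [Nat.sub_zero, T.g_pow_n, pow_zero, mul_one] at h
    rw [h]
    norm_num [Aux.qbinom_zero_right]
  · intro h y
    suffices hEq : (lam y) • lam = lam ∘ₗ LinearMap.mulRight k y ∘ₗ lCont k H lam by
      have hy := LinearMap.congr_fun hEq h
      simp only [LinearMap.smul_apply, smul_eq_mul, LinearMap.comp_apply,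
        LinearMap.mulRight_apply] at hy
      rw [mul_comm]
      exact hy
    refine T.basis.ext fun p => ?_
    rcases p with ⟨a, b⟩
    rw [T.basis_eq]
    simp only [LinearMap.smul_apply, smul_eq_mul, LinearMap.comp_apply,
      LinearMap.mulRight_apply]
    obtain ⟨m, hm, hgm⟩ : ∃ m, m ≤ n-1 ∧ T.g^(a:ℕ) = T.g^(n-m) := by
      rcases Nat.eq_zero_or_pos (a:ℕ) with h0 | h0
      · exact ⟨0, by omega, by rw [h0, Nat.sub_zero, pow_zero, T.g_pow_n]⟩
      · have ha : (a:ℕ) < n := a.isLt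
        exact ⟨n - (a:ℕ), by omega, by rw [show n - (n-(a:ℕ)) = (a:ℕ) by omega]⟩
    rw [hgm]
    have hb : (b:ℕ) ≤ n-1 := by have := b.isLt; omega
    rcases Nat.lt_or_ge (b:ℕ) m with hbm | hbm
    · -- b < m : both sides vanish
      rw [TaftAux.lCont_zero T hn α lam hlam m (b:ℕ) hm hb hbm, zero_mul, map_zero,
        hlam m (b:ℕ) hm hb, Aux.qbinom_of_lt q (b:ℕ) (m:ℤ) (by omega)]
      ring
    · rw [TaftAux.lCont_eq T hn hq α lam hlam m (b:ℕ) hm hb hbm, hlam m (b:ℕ) hm hb,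
        smul_mul_assoc, smul_mul_assoc, map_smul, map_smul,
        TaftAux.lam_W_pow T hn hq α lam hlam m y, smul_eq_mul, smul_eq_mul]
      have hα : α^(b:ℕ) = α^((b:ℕ)-m) * α^m := by
        rw [← pow_add]
        congr 1
        omega
      rw [hα]
      ring
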